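/- Let r ∈ ℤ^{2m+1} be nonzero. If r ∈ G then {u ∈ ℂ^M : ⟨u, r̲⟩ = 0} = ℂ^M. If r ∉ G then the subspace H_r = {u ∈ ℂ^M : ⟨u, r̲⟩ = 0} contains r, the quotient ℂ^M/H_r is one-dimensional, and moreover ⟨r̲, r̲⟩ is a positive integer. -/

import Mathlib

/-- The "underline" map on `ℤ^{2m+1}`:
`ul r = (r_{m+1}+r_M, …, r_{2m}+r_M, −r_1+r_M, …, −r_m+r_M, −Σ_{i=1}^{2m} r_i)`. -/
def ul (m : ℕ) (r : Fin (2*m+1) → ℤ) : Fin (2*m+1) → ℤ := fun i =>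
  if h : (i : ℕ) < m then r ⟨(i : ℕ) + m, by omega⟩ + r ⟨2*m, by omega⟩
  else if h2 : (i : ℕ) < 2*m then - r ⟨(i : ℕ) - m, by omega⟩ + r ⟨2*m, by omega⟩
  else - ∑ j : Fin (2*m), r ⟨(j : ℕ), by have := j.isLt; omega⟩

/-- `r ∈ G` iff `r_i = r_M` for `1 ≤ i ≤ m` and `r_i = −r_M` for `m+1 ≤ i ≤ 2m`. -/
def memG (m : ℕ) (r : Fin (2*m+1) → ℤ) : Prop :=
  ∀ i : Fin (2*m+1),
    ((i : ℕ) < m → r i = r ⟨2*m, by omega⟩) ∧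
    (m ≤ (i : ℕ) → (i : ℕ) < 2*m → r i = - r ⟨2*m, by omega⟩)

/-- subspace `{u ∈ ℂ^M : ⟨u, c⟩ = 0}` for a fixed vector `c ∈ ℂ^M`. -/
noncomputable def perp (M : ℕ) (c : Fin M → ℂ) : Submodule ℂ (Fin M → ℂ) where
  carrier := {u | ∑ i, u i * c i = 0}
  add_mem' := fun {a b} ha hb => by
    simp only [Set.mem_setOf_eq, Pi.add_apply, add_mul, Finset.sum_add_distrib] at *
    rw [ha, hb, add_zero]
  zero_mem' := by simp
  smul_mem' := fun t a ha => by
    simp only [Set.mem_setOf_eq, Pi.smul_apply, smul_eq_mul, mul_assoc,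
      ← Finset.mul_sum] at *
    rw [ha, mul_zero]

section
variable (m : ℕ) (r : Fin (2*m+1) → ℤ)

/-- total extension of `r` to ℕ -/
def Fx : ℕ → ℤ := fun i => r ⟨i % (2*m+1), Nat.mod_lt _ (by omega)⟩

lemma Fx_eq (i : ℕ) (h : i < 2*m+1) : Fx m r i = r ⟨i, h⟩ := by
  simp only [Fx]
  congr 1
  exact Fin.ext (Nat.mod_eq_of_lt h)

/-- total extension of `ul m r` to ℕ -/
def Ux : ℕ → ℤ := Fx m (ul m r)

lemma sum_fin_two (p : ∀ j : Fin (2*m), (j:ℕ) < 2*m+1) :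
    (∑ j : Fin (2*m), r ⟨(j : ℕ), p j⟩) = ∑ i ∈ Finset.range (2*m), Fx m r i := by
  rw [← Fin.sum_univ_eq_sum_range]
  exact Finset.sum_congr rfl (fun j _ => (Fx_eq m r j (p j)).symm)

lemma Ux_lt (i : ℕ) (h : i < m) : Ux m r i = Fx m r (m+i) + Fx m r (2*m) := by
  rw [Ux, Fx_eq m _ i (by omega), ul]
  rw [dif_pos (show ((⟨i, by omega⟩ : Fin (2*m+1)) : ℕ) < m from h)]
  rw [Fx_eq m r (m+i) (by omega), Fx_eq m r (2*m) (by omega)]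
  congr 2
  exact Fin.ext (by simp only [Fin.val_mk]; omega)

lemma Ux_mid (i : ℕ) (h : i < m) : Ux m r (m+i) = - Fx m r i + Fx m r (2*m) := by
  rw [Ux, Fx_eq m _ (m+i) (by omega), ul]
  rw [dif_neg (by simp only [Fin.val_mk]; omega), dif_pos (by simp only [Fin.val_mk]; omega)]
  rw [Fx_eq m r i (by omega), Fx_eq m r (2*m) (by omega)]
  congr 3
  exact Fin.ext (by simp only [Fin.val_mk]; omega)

lemma Ux_last : Ux m r (2*m) = - ∑ i ∈ Finset.range (2*m), Fx m r i := by
  rw [Ux, Fx_eq m _ (2*m) (by omega), ul]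
  rw [dif_neg (by simp only [Fin.val_mk]; omega), dif_neg (by simp only [Fin.val_mk]; omega)]
  rw [sum_fin_two]

lemma key : ∑ i : Fin (2*m+1), r i * ul m r i = 0 := by
  have h1 : ∑ i : Fin (2*m+1), r i * ul m r i
      = ∑ i ∈ Finset.range (2*m+1), Fx m r i * Ux m r i := by
    rw [← Fin.sum_univ_eq_sum_range]
    exact Finset.sum_congr rfl (fun j _ => by
      rw [Fx_eq m r j j.isLt, Ux, Fx_eq m _ j j.isLt])
  rw [h1, Finset.sum_range_succ, Ux_last]
  have h2 : (2:ℕ)*m = m + m := by ring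
  rw [h2, Finset.sum_range_add, Finset.sum_range_add]
  have h3 : ∀ i ∈ Finset.range m,
      Fx m r i * Ux m r i = Fx m r i * (Fx m r (m+i) + Fx m r (2*m)) := by
    intro i hi
    rw [Ux_lt m r i (Finset.mem_range.mp hi)]
  have h4 : ∀ i ∈ Finset.range m,
      Fx m r (m+i) * Ux m r (m+i) = Fx m r (m+i) * (- Fx m r i + Fx m r (2*m)) := by
    intro i hi
    rw [Ux_mid m r i (Finset.mem_range.mp hi)]
  rw [Finset.sum_congr rfl h3, Finset.sum_congr rfl h4]
  rw [← h2]
  have h5 : Fx m r (2*m) * (∑ x ∈ Finset.range m, Fx m r x + ∑ x ∈ Finset.range m, Fx m r (m+x))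
      = ∑ x ∈ Finset.range m, Fx m r (2*m) * (Fx m r x + Fx m r (m+x)) := by
    rw [← Finset.sum_add_distrib, Finset.mul_sum]
  rw [mul_neg, h5, ← Finset.sum_neg_distrib, ← Finset.sum_add_distrib, ← Finset.sum_add_distrib]
  apply Finset.sum_eq_zero
  intro i hi
  ring

end

section
variable (m : ℕ) (r : Fin (2*m+1) → ℤ)

lemma hval' (k : ℕ) (hk : k < 2*m+1) : ul m r ⟨k, hk⟩ = Ux m r k :=
  (Fx_eq m (ul m r) k hk).symm

lemma hval (i : Fin (2*m+1)) : ul m r i = Ux m r ↑i := by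
  rw [← hval' m r ↑i i.isLt]

lemma rFx (i : Fin (2*m+1)) : r i = Fx m r ↑i := by
  rw [Fx_eq m r ↑i i.isLt]

lemma ul_zero_of_memG (h : memG m r) : ∀ i, ul m r i = 0 := by
  have hG1 : ∀ (k : ℕ) (hk : k < m), Fx m r k = Fx m r (2*m) := by
    intro k hk
    rw [Fx_eq m r k (by omega), Fx_eq m r (2*m) (by omega)]
    exact (h ⟨k, by omega⟩).1 hk
  have hG2 : ∀ (k : ℕ), m ≤ k → k < 2*m → Fx m r k = - Fx m r (2*m) := by
    intro k h1 h2
    rw [Fx_eq m r k (by omega), Fx_eq m r (2*m) (by omega)]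
    exact (h ⟨k, by omega⟩).2 h1 h2
  intro i
  rw [hval]
  rcases Nat.lt_or_ge (↑i) m with hi | hi
  · rw [Ux_lt m r ↑i hi, hG2 (m + ↑i) (by omega) (by omega)]
    ring
  · rcases Nat.lt_or_ge (↑i) (2*m) with hi2 | hi2
    · have hieq : (i : ℕ) = m + ((i : ℕ) - m) := by omega
      rw [hieq, Ux_mid m r _ (by omega), hG1 _ (by omega)]
      ring
    · have hieq : (i : ℕ) = 2*m := by have := i.isLt; omega
      rw [hieq, Ux_last]
      have h2 : (2:ℕ)*m = m + m := by ring
      rw [h2, Finset.sum_range_add, ← Finset.sum_add_distrib]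
      rw [Finset.sum_eq_zero]
      · ring
      · intro k hk
        rw [hG1 k (Finset.mem_range.mp hk), hG2 (m+k) (by omega)
          (by have := Finset.mem_range.mp hk; omega)]
        ring

lemma memG_of_ul_zero (h : ∀ i, ul m r i = 0) : memG m r := by
  intro i
  constructor
  · intro hi
    have h1 : Ux m r (m + ↑i) = 0 := by
      rw [← hval' m r (m + ↑i) (by omega)]; exact h _
    rw [Ux_mid m r ↑i hi] at h1
    rw [rFx m r i, rFx m r ⟨2*m, by omega⟩]
    simp only [Fin.val_mk]
    omega
  · intro h1 h2
    have h3 : Ux m r ((i : ℕ) - m) = 0 := by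
      rw [← hval' m r _ (by omega)]; exact h _
    rw [Ux_lt m r _ (by omega)] at h3
    have hieq : m + ((i : ℕ) - m) = (i : ℕ) := by omega
    rw [hieq] at h3
    rw [rFx m r i, rFx m r ⟨2*m, by omega⟩]
    simp only [Fin.val_mk]
    omega

end

noncomputable def phi (M : ℕ) (c : Fin M → ℂ) : (Fin M → ℂ) →ₗ[ℂ] ℂ where
  toFun u := ∑ i, u i * c i
  map_add' a b := by simp [add_mul, Finset.sum_add_distrib]
  map_smul' t a := by simp [mul_assoc, ← Finset.mul_sum]

lemma mem_perp {M : ℕ} (c u : Fin M → ℂ) : u ∈ perp M c ↔ ∑ i, u i * c i = 0 :=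
  Iff.rfl

lemma perp_eq_ker (M : ℕ) (c : Fin M → ℂ) : perp M c = LinearMap.ker (phi M c) := by
  ext u
  exact Iff.rfl

lemma phi_apply {M : ℕ} (c u : Fin M → ℂ) : phi M c u = ∑ i, u i * c i := rfl

lemma phi_surj (M : ℕ) (c : Fin M → ℂ) (i₀ : Fin M) (hc : c i₀ ≠ 0) :
    Function.Surjective (phi M c) := by
  intro z
  refine ⟨Pi.single i₀ (z / c i₀), ?_⟩
  rw [phi_apply]
  simp [Pi.single_apply, ite_mul, Finset.sum_ite_eq', div_mul_cancel₀, hc]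

lemma finrank_quot (M : ℕ) (c : Fin M → ℂ) (i₀ : Fin M) (hc : c i₀ ≠ 0) :
    Module.finrank ℂ ((Fin M → ℂ) ⧸ perp M c) = 1 := by
  rw [perp_eq_ker]
  rw [LinearEquiv.finrank_eq (LinearMap.quotKerEquivRange (phi M c))]
  rw [LinearMap.range_eq_top.mpr (phi_surj M c i₀ hc)]
  simp

/-- For nonzero `r ∈ ℤ^{2m+1}`: if `r ∈ G` then `{u : ⟨u, r̲⟩ = 0} = ℂ^M`; if `r ∉ G`
then `H_r = {u : ⟨u, r̲⟩ = 0}` contains `r`, the quotient `ℂ^M/H_r` is one-dimensional,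
and `⟨r̲, r̲⟩` is a positive integer. -/
theorem stmt10 (m : ℕ) (hm : 1 ≤ m) (r : Fin (2*m+1) → ℤ) (hr : r ≠ 0) :
    (memG m r → perp (2*m+1) (fun i => (ul m r i : ℂ)) = ⊤) ∧
    (¬ memG m r →
      (fun i => (r i : ℂ)) ∈ perp (2*m+1) (fun i => (ul m r i : ℂ)) ∧
      Module.finrank ℂ
        ((Fin (2*m+1) → ℂ) ⧸ perp (2*m+1) (fun i => (ul m r i : ℂ))) = 1 ∧
      0 < ∑ i, ul m r i * ul m r i) := by
  constructor
  · intro hG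
    have hz := ul_zero_of_memG m r hG
    rw [Submodule.eq_top_iff']
    intro u
    rw [mem_perp]
    simp [hz]
  · intro hG
    have hex : ∃ i, ul m r i ≠ 0 := by
      by_contra hc
      push_neg at hc
      exact hG (memG_of_ul_zero m r hc)
    obtain ⟨i₀, hi₀⟩ := hex
    have hc0 : (fun i => (ul m r i : ℂ)) i₀ ≠ 0 := by
      simpa using (Int.cast_ne_zero.mpr hi₀ : ((ul m r i₀ : ℤ) : ℂ) ≠ 0)
    refine ⟨?_, ?_, ?_⟩
    · rw [mem_perp]
      have hcast : ((∑ i : Fin (2*m+1), r i * ul m r i : ℤ) : ℂ) = 0 := by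
        rw [key m r]; norm_num
      push_cast at hcast
      exact hcast
    · exact finrank_quot _ _ i₀ hc0
    · exact Finset.sum_pos' (fun i _ => mul_self_nonneg _)
        ⟨i₀, Finset.mem_univ _, mul_self_pos.mpr hi₀⟩
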